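/- arXiv:2405.18031 — 5 statements merged into one kernel-verified Lean document; each statement's English description precedes it below -/
import Mathlib

section
/- Let d,n ≥ 1, M ≥ 0, let each f_i : ℝ^d → ℝ (i = 1,…,n) be convex and M-Lipschitz, let r_x, r_yz > 0 and set r = r_x + 1/r_yz. Then inf_{x ∈ (ℝ^d)^n} sup_{y ∈ (ℝ^d)^n} sup_{z ∈ L⊥} Q(x,y,z) = n · inf_{x ∈ ℝ^d} p(x), and the infimum on the right-hand side is attained. -/
open scoped BigOperators RealInnerProductSpace

noncomputable section

/-- `(ℝ^d)^n` with the Euclidean (ℓ²-product) norm. -/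
abbrev Vec (d n : ℕ) := PiLp 2 (fun _ : Fin n => EuclideanSpace ℝ (Fin d))

/-- the constant vector -/
def cvec (d n : ℕ) (v : EuclideanSpace ℝ (Fin d)) : Vec d n :=
  (WithLp.equiv 2 (∀ _ : Fin n, EuclideanSpace ℝ (Fin d))).symm fun _ => v

@[simp] lemma cvec_apply {d n : ℕ} (v : EuclideanSpace ℝ (Fin d)) (i : Fin n) :
    cvec d n v i = v := rfl

lemma inner_cvec {d n : ℕ} (z : Vec d n) (v : EuclideanSpace ℝ (Fin d)) :
    ⟪z, cvec d n v⟫ = ⟪∑ i, z i, v⟫ := by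
  rw [PiLp.inner_apply, sum_inner]
  simp only [cvec_apply]

lemma norm_cvec_sq {d n : ℕ} (v : EuclideanSpace ℝ (Fin d)) :
    ‖cvec d n v‖ ^ 2 = n * ‖v‖ ^ 2 := by
  rw [← real_inner_self_eq_norm_sq, PiLp.inner_apply]
  show (∑ _i : Fin n, ⟪v, v⟫) = n * ‖v‖ ^ 2
  rw [real_inner_self_eq_norm_sq, Finset.sum_const, Finset.card_univ, Fintype.card_fin,
    nsmul_eq_mul]

lemma sum_cvec {d n : ℕ} (v : EuclideanSpace ℝ (Fin d)) :
    ∑ i, cvec d n v i = (n : ℝ) • v := by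
  simp [Finset.sum_const, ← Nat.cast_smul_eq_nsmul ℝ]

lemma quad_le {d n : ℕ} (ryz : ℝ) (hryz : 0 < ryz) (w x : Vec d n) :
    -⟪w, x⟫ - ryz / 2 * ‖w‖ ^ 2 ≤ ‖x‖ ^ 2 / (2 * ryz) := by
  have h0 : (0 : ℝ) ≤ ‖ryz • w + x‖ ^ 2 := sq_nonneg _
  rw [norm_add_sq_real, norm_smul, real_inner_smul_left, Real.norm_eq_abs, abs_of_pos hryz,
    mul_pow] at h0
  have h1 : (0:ℝ) < 2 * ryz := by linarith
  rw [le_div_iff₀ h1]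
  nlinarith [sq_nonneg ‖w‖, sq_nonneg ‖x‖]

theorem stmt0 (d n : ℕ) (hd : 1 ≤ d) (hn : 1 ≤ n) (M : ℝ) (hM : 0 ≤ M)
    (f : Fin n → EuclideanSpace ℝ (Fin d) → ℝ)
    (hconv : ∀ i, ConvexOn ℝ Set.univ (f i))
    (hlip : ∀ i x x', |f i x - f i x'| ≤ M * ‖x - x'‖)
    (rx ryz : ℝ) (hrx : 0 < rx) (hryz : 0 < ryz)
    (r : ℝ) (hr : r = rx + 1 / ryz)
    (F : Vec d n → ℝ) (hF : ∀ x, F x = (∑ i, f i (x i)) + (rx / 2) * ‖x‖ ^ 2)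
    (G : Vec d n → Vec d n → ℝ) (hG : ∀ y z, G y z = (ryz / 2) * ‖y + z‖ ^ 2)
    (Q : Vec d n → Vec d n → Vec d n → ℝ)
    (hQ : ∀ x y z, Q x y z = F x - ⟪y, x⟫ - G y z)
    (p : EuclideanSpace ℝ (Fin d) → ℝ)
    (hp : ∀ x, p x = (n : ℝ)⁻¹ * (∑ i, f i x) + (r / 2) * ‖x‖ ^ 2) :
    ∃ xstar : EuclideanSpace ℝ (Fin d), (∀ x, p xstar ≤ p x) ∧
      (⨅ x : Vec d n, ⨆ y : Vec d n, ⨆ z : {z : Vec d n // ∑ i, z i = 0},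
          ((Q x y z.1 : ℝ) : EReal)) = (((n : ℝ) * p xstar : ℝ) : EReal) := by
  have hnR : (0:ℝ) < n := by exact_mod_cast hn
  have hn0 : (n:ℝ) ≠ 0 := ne_of_gt hnR
  have hr0 : 0 < r := by rw [hr]; positivity
  -- existence of a minimizer of p
  obtain ⟨xstar, hmin⟩ : ∃ xstar, ∀ x, p xstar ≤ p x := by
    have hcontf : ∀ i, Continuous (f i) := by
      intro i
      refine (LipschitzWith.of_dist_le_mul (K := ⟨M, hM⟩) fun a b => ?_).continuous
      rw [Real.dist_eq, dist_eq_norm]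
      exact hlip i a b
    have hcont : Continuous p := by
      have : p = fun x => (n : ℝ)⁻¹ * (∑ i, f i x) + (r / 2) * ‖x‖ ^ 2 := funext hp
      rw [this]
      exact (continuous_const.mul (continuous_finset_sum _ fun i _ => hcontf i)).add
        (continuous_const.mul (continuous_norm.pow 2))
    set C : ℝ := (n : ℝ)⁻¹ * ∑ i, f i 0 with hC
    have key : ∀ x, C - M * ‖x‖ + (r / 2) * ‖x‖ ^ 2 ≤ p x := by
      intro x
      rw [hp]
      have h1 : ∀ i, f i 0 - M * ‖x‖ ≤ f i x := by
        intro i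
        have h := hlip i x 0
        rw [sub_zero] at h
        have := abs_le.mp h
        linarith [this.1]
      have h2 : (∑ i, f i 0) - n * (M * ‖x‖) ≤ ∑ i, f i x := by
        have := Finset.sum_le_sum (fun i (_ : i ∈ Finset.univ) => h1 i)
        simpa [Finset.sum_sub_distrib, Finset.sum_const, Finset.card_univ, mul_comm] using this
      have h3 : (n:ℝ)⁻¹ * ((∑ i, f i 0) - n * (M * ‖x‖)) ≤ (n:ℝ)⁻¹ * ∑ i, f i x :=
        mul_le_mul_of_nonneg_left h2 (by positivity)
      have h4 : (n:ℝ)⁻¹ * ((∑ i, f i 0) - n * (M * ‖x‖)) = C - M * ‖x‖ := by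
        field_simp [hC]
        rw [hC, mul_sub, mul_inv_cancel_left₀ hn0]; ring
      linarith
    have t1 : Filter.Tendsto (fun t : ℝ => C - M * t + (r / 2) * t ^ 2) Filter.atTop
        Filter.atTop := by
      have h5 : Filter.Tendsto (fun t : ℝ => t * ((r / 2) * t - M) + C) Filter.atTop
          Filter.atTop := by
        refine Filter.tendsto_atTop_add_const_right _ C ?_
        exact Filter.tendsto_id.atTop_mul_atTop₀
          (Filter.tendsto_atTop_add_const_right _ (-M) (Filter.tendsto_id.const_mul_atTop (by linarith)))
      have : (fun t : ℝ => C - M * t + (r / 2) * t ^ 2)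
          = fun t => t * ((r / 2) * t - M) + C := by funext t; ring
      rw [this]; exact h5
    have t2 : Filter.Tendsto p (Filter.cocompact _) Filter.atTop :=
      Filter.tendsto_atTop_mono key (t1.comp tendsto_norm_cocompact_atTop)
    exact hcont.exists_forall_le t2
  -- key identity : F (cvec v) + ‖cvec v‖²/(2 ryz) = n p v
  have hid : ∀ v, F (cvec d n v) + ‖cvec d n v‖ ^ 2 / (2 * ryz) = n * p v := by
    intro v
    rw [hF, hp, norm_cvec_sq]
    simp only [cvec_apply]
    rw [hr]
    field_simp
    ring
  -- upper bound at x = cvec xstar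
  have hub : ∀ (y z : Vec d n), (∑ i, z i = 0) → Q (cvec d n xstar) y z ≤ n * p xstar := by
    intro y z hz
    rw [hQ, hG]
    have hzx : ⟪z, cvec d n xstar⟫ = 0 := by rw [inner_cvec, hz, inner_zero_left]
    have hyx : ⟪y, cvec d n xstar⟫ = ⟪y + z, cvec d n xstar⟫ := by
      rw [inner_add_left, hzx, add_zero]
    rw [hyx]
    have h1 := quad_le ryz hryz (y + z) (cvec d n xstar)
    have h2 := hid xstar
    linarith
  -- lower bound : for every x there is an admissible (y,z) with Q x y z ≥ n p xstar
  have hlb : ∀ x : Vec d n, ∃ y z : Vec d n, (∑ i, z i = 0) ∧ n * p xstar ≤ Q x y z := by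
    intro x
    set xb : EuclideanSpace ℝ (Fin d) := (n:ℝ)⁻¹ • ∑ i, x i with hxb
    set xL : Vec d n := cvec d n xb with hxL
    set z0 : Vec d n := x - xL with hz0def
    have hsum0 : ∑ i, z0 i = 0 := by
      have h : ∑ i, z0 i = (∑ i, x i) - ∑ i, xL i := by
        simp [hz0def, Finset.sum_sub_distrib]
      rw [h, hxL, sum_cvec, hxb, smul_smul, mul_inv_cancel₀ hn0, one_smul, sub_self]
    have horth : ⟪z0, xL⟫ = 0 := by
      rw [hxL, inner_cvec, hsum0, inner_zero_left]
    have hx_eq : x = xL + z0 := by rw [hz0def]; abel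
    have hinner_xL : ⟪xL, x⟫ = ‖xL‖ ^ 2 := by
      have h : ⟪xL, x⟫ = ⟪xL, xL + z0⟫ := by rw [← hx_eq]
      rw [h, inner_add_right, real_inner_self_eq_norm_sq, real_inner_comm, horth, add_zero]
    have hinner_z0 : ⟪z0, x⟫ = ‖z0‖ ^ 2 := by
      have h : ⟪z0, x⟫ = ⟪z0, xL + z0⟫ := by rw [← hx_eq]
      rw [h, inner_add_right, real_inner_self_eq_norm_sq, horth, zero_add]
    have hQval : ∀ t : ℝ, Q x (-((1/ryz) • xL) - t • z0) (t • z0)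
        = F x + ‖xL‖ ^ 2 / (2 * ryz) + t * ‖z0‖ ^ 2 := by
      intro t
      rw [hQ, hG]
      have hyz : -((1/ryz) • xL) - t • z0 + t • z0 = -((1/ryz) • xL) := by abel
      rw [hyz]
      have h1 : ⟪-((1/ryz) • xL) - t • z0, x⟫ = -((1/ryz) * ‖xL‖ ^ 2) - t * ‖z0‖ ^ 2 := by
        rw [inner_sub_left, inner_neg_left, real_inner_smul_left, real_inner_smul_left,
          hinner_xL, hinner_z0]
      have h2 : ‖-((1/ryz) • xL)‖ ^ 2 = (1/ryz) ^ 2 * ‖xL‖ ^ 2 := by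
        rw [norm_neg, norm_smul, Real.norm_eq_abs, abs_of_pos (by positivity), mul_pow]
      rw [h1, h2]
      field_simp
      ring
    have hzsum : ∀ t : ℝ, ∑ i, (t • z0) i = 0 := by
      intro t
      simp only [PiLp.smul_apply]
      rw [← Finset.smul_sum, hsum0, smul_zero]
    by_cases hz0 : z0 = 0
    · refine ⟨-((1/ryz) • xL) - (0:ℝ) • z0, (0:ℝ) • z0, hzsum 0, ?_⟩
      rw [hQval 0]
      have hxx : x = xL := by rw [hx_eq, hz0, add_zero]
      have hFeq : F x + ‖xL‖ ^ 2 / (2 * ryz) = n * p xb := by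
        rw [hxx, hxL]; exact hid xb
      have hple : (n:ℝ) * p xstar ≤ n * p xb :=
        mul_le_mul_of_nonneg_left (hmin xb) hnR.le
      linarith
    · have hz0pos : (0:ℝ) < ‖z0‖ ^ 2 := by
        have := norm_pos_iff.mpr hz0
        positivity
      set t := (n * p xstar - F x - ‖xL‖ ^ 2 / (2 * ryz)) / ‖z0‖ ^ 2 with ht
      refine ⟨-((1/ryz) • xL) - t • z0, t • z0, hzsum t, ?_⟩
      rw [hQval t]
      have hmul : t * ‖z0‖ ^ 2 = n * p xstar - F x - ‖xL‖ ^ 2 / (2 * ryz) :=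
        div_mul_cancel₀ _ (ne_of_gt hz0pos)
      linarith
  refine ⟨xstar, hmin, le_antisymm ?_ ?_⟩
  · refine iInf_le_of_le (cvec d n xstar) (iSup_le fun y => iSup_le fun z => ?_)
    exact_mod_cast hub y z.1 z.2
  · refine le_iInf fun x => ?_
    obtain ⟨y, z, hz, hle⟩ := hlb x
    refine le_trans ?_ (le_trans
      (le_iSup (fun z' : {z : Vec d n // ∑ i, z i = 0} => ((Q x y z'.1 : ℝ) : EReal)) ⟨z, hz⟩)
      (le_iSup (fun y' => ⨆ z' : {z : Vec d n // ∑ i, z i = 0}, ((Q x y' z'.1 : ℝ) : EReal)) y))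
    exact_mod_cast hle

end
end

section
/- Let d,n ≥ 1, M ≥ 0, let each f_i : ℝ^d → ℝ be convex and M-Lipschitz, let r > 0 and r_x, r_yz > 0 with r_x + 1/r_yz = r. Let x* be the unique minimizer of p and set w* = (x*,…,x*) ∈ L. Then there exist y* ∈ (ℝ^d)^n and z* ∈ L⊥ such that: (i) F(x') ≥ F(w*) + ⟨y*, x' − w*⟩ for all x' ∈ (ℝ^d)^n (i.e. y* ∈ ∂F(w*)); (ii) w* + r_yz(y* + z*) = 0; (iii) r_yz(y* + z*) ∈ L; and (iv) ‖w*‖² ≤ nM²/r², ‖y*‖² ≤ (1 + r_x/r)² nM², and ‖z*‖² ≤ 4nM². -/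
open scoped BigOperators RealInnerProductSpace

noncomputable section

variable {E : Type*} [NormedAddCommGroup E] [InnerProductSpace ℝ E]

/-- difference quotient -/
def dq (f : E → ℝ) (a v : E) (t : ℝ) : ℝ := (f (a + t • v) - f a) / t

/-- directional derivative -/
def dd (f : E → ℝ) (a v : E) : ℝ := ⨅ t : {t : ℝ // 0 < t}, dq f a v t.1

section dd
variable {f : E → ℝ} {a : E} {M : ℝ}

theorem dq_mono (hconv : ConvexOn ℝ Set.univ f) {v : E} {t s : ℝ} (ht : 0 < t) (hts : t ≤ s) :
    dq f a v t ≤ dq f a v s := by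
  have hs : 0 < s := ht.trans_le hts
  have key : f (a + t • v) ≤ (1 - t/s) * f a + (t/s) * f (a + s • v) := by
    have h1 : (0:ℝ) ≤ 1 - t/s := by
      have : t/s ≤ 1 := (div_le_one hs).2 hts
      linarith
    have h2 : (0:ℝ) ≤ t/s := div_nonneg ht.le hs.le
    have := hconv.2 (Set.mem_univ a) (Set.mem_univ (a + s • v)) h1 h2 (by ring)
    have he : (1 - t/s) • a + (t/s) • (a + s • v) = a + t • v := by
      rw [smul_add, smul_smul]
      rw [div_mul_cancel₀ _ hs.ne']
      module
    rw [he] at this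
    simpa using this
  rw [dq, dq, div_le_div_iff₀ ht hs]
  have hc : t / s * s = t := div_mul_cancel₀ _ hs.ne'
  have key2 : f (a + t • v) * s ≤ f a * s - t * f a + t * f (a + s • v) := by
    calc f (a + t • v) * s ≤ ((1 - t/s) * f a + t/s * f (a + s • v)) * s :=
          mul_le_mul_of_nonneg_right key hs.le
      _ = f a * s - (t/s*s) * f a + (t/s*s) * f (a + s • v) := by ring
      _ = f a * s - t * f a + t * f (a + s • v) := by rw [hc]
  linarith

theorem dq_le (hlip : ∀ x x', |f x - f x'| ≤ M * ‖x - x'‖) (v : E) {t : ℝ} (ht : 0 < t) : dq f a v t ≤ M * ‖v‖ := by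
  have := hlip (a + t • v) a
  have h2 : |f (a + t • v) - f a| ≤ M * (t * ‖v‖) := by
    simpa [norm_smul, abs_of_pos ht] using this
  rw [dq, div_le_iff₀ ht]
  calc f (a + t • v) - f a ≤ M * (t * ‖v‖) := (abs_le.1 h2).2
    _ = M * ‖v‖ * t := by ring

theorem dq_ge (hlip : ∀ x x', |f x - f x'| ≤ M * ‖x - x'‖) (v : E) {t : ℝ} (ht : 0 < t) : -(M * ‖v‖) ≤ dq f a v t := by
  have := hlip (a + t • v) a
  have h2 : |f (a + t • v) - f a| ≤ M * (t * ‖v‖) := by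
    simpa [norm_smul, abs_of_pos ht] using this
  rw [dq, le_div_iff₀ ht]
  have := (abs_le.1 h2).1
  nlinarith

theorem dd_bddBelow (hlip : ∀ x x', |f x - f x'| ≤ M * ‖x - x'‖) (v : E) : BddBelow (Set.range fun t : {t : ℝ // 0 < t} => dq f a v t.1) := by
  refine ⟨-(M * ‖v‖), ?_⟩
  rintro x ⟨t, rfl⟩
  exact dq_ge hlip v t.2

theorem dd_le_dq (hlip : ∀ x x', |f x - f x'| ≤ M * ‖x - x'‖) (v : E) {t : ℝ} (ht : 0 < t) : dd f a v ≤ dq f a v t :=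
  ciInf_le (dd_bddBelow hlip v) ⟨t, ht⟩

theorem dq_le_dd (v : E) {c : ℝ} (h : ∀ t : ℝ, 0 < t → c ≤ dq f a v t) : c ≤ dd f a v :=
  le_ciInf fun t => h t.1 t.2

theorem dd_exists_dq_lt (hlip : ∀ x x', |f x - f x'| ≤ M * ‖x - x'‖) (v : E) {ε : ℝ}
    (hε : 0 < ε) : ∃ t : ℝ, 0 < t ∧ dq f a v t < dd f a v + ε := by
  obtain ⟨t, ht⟩ := exists_lt_of_ciInf_lt (lt_add_of_pos_right (dd f a v) hε)
  exact ⟨t.1, t.2, ht⟩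

theorem dd_zero : dd f a (0 : E) = 0 := by
  have : ∀ t : {t : ℝ // 0 < t}, dq f a (0 : E) t.1 = 0 := by
    intro t; simp [dq]
  rw [dd]
  simp [this]

theorem dd_le_lin (hlip : ∀ x x', |f x - f x'| ≤ M * ‖x - x'‖) (v : E) :
    dd f a v ≤ M * ‖v‖ :=
  (dd_le_dq hlip v one_pos).trans (dq_le hlip v one_pos)

theorem dd_le_sub (hlip : ∀ x x', |f x - f x'| ≤ M * ‖x - x'‖) (v : E) :
    dd f a v ≤ f (a + v) - f a := by
  have := dd_le_dq (a := a) hlip v one_pos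
  simpa [dq] using this

theorem dd_smul (hlip : ∀ x x', |f x - f x'| ≤ M * ‖x - x'‖) (v : E) {c : ℝ} (hc : 0 < c) :
    dd f a (c • v) = c * dd f a v := by
  have key : ∀ (t : ℝ), 0 < t → dq f a (c • v) t = c * dq f a v (t * c) := by
    intro t ht
    rw [dq, dq, smul_smul]
    rw [mul_comm t c]
    field_simp
  apply le_antisymm
  · apply le_of_forall_pos_le_add
    intro ε hε
    obtain ⟨t, ht, hlt⟩ := dd_exists_dq_lt (a := a) hlip v (div_pos hε hc)
    have h1 : dd f a (c • v) ≤ dq f a (c • v) (t / c) := dd_le_dq hlip _ (div_pos ht hc)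
    rw [key _ (div_pos ht hc), div_mul_cancel₀ _ hc.ne'] at h1
    calc dd f a (c • v) ≤ c * dq f a v t := h1
      _ ≤ c * (dd f a v + ε / c) := by nlinarith
      _ = c * dd f a v + ε := by field_simp
  · apply le_of_forall_pos_le_add
    intro ε hε
    obtain ⟨t, ht, hlt⟩ := dd_exists_dq_lt (a := a) hlip (c • v) hε
    have h1 : dd f a v ≤ dq f a v (t * c) := dd_le_dq hlip _ (mul_pos ht hc)
    have h2 : dq f a v (t * c) = (dq f a (c • v) t) / c := by
      rw [key _ ht]; field_simp
    rw [h2] at h1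
    have : c * dd f a v ≤ dq f a (c • v) t := by
      rw [le_div_iff₀ hc] at h1; linarith [h1]
    linarith

theorem dd_add (hconv : ConvexOn ℝ Set.univ f)
    (hlip : ∀ x x', |f x - f x'| ≤ M * ‖x - x'‖) (u v : E) :
    dd f a (u + v) ≤ dd f a u + dd f a v := by
  have key : ∀ t : ℝ, 0 < t → dq f a (u + v) t ≤ dq f a u (2*t) + dq f a v (2*t) := by
    intro t ht
    have hmid : a + t • (u + v) = (1/2 : ℝ) • (a + (2*t) • u) + (1/2 : ℝ) • (a + (2*t) • v) := by
      module
    have hcv := hconv.2 (Set.mem_univ (a + (2*t) • u)) (Set.mem_univ (a + (2*t) • v))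
      (by norm_num : (0:ℝ) ≤ 1/2) (by norm_num : (0:ℝ) ≤ 1/2) (by norm_num)
    rw [← hmid] at hcv
    rw [dq, dq, dq]
    rw [← add_div, div_le_div_iff₀ ht (by linarith)]
    simp only [smul_eq_mul] at hcv
    nlinarith [mul_le_mul_of_nonneg_right hcv ht.le]
  apply le_of_forall_pos_le_add
  intro ε hε
  obtain ⟨t, ht, hlt⟩ := dd_exists_dq_lt (a := a) hlip u (half_pos hε)
  obtain ⟨s, hs, hls⟩ := dd_exists_dq_lt (a := a) hlip v (half_pos hε)
  set m := min t s with hm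
  have hm0 : 0 < m := lt_min ht hs
  have h1 : dd f a (u + v) ≤ dq f a (u + v) (m/2) := dd_le_dq hlip _ (by linarith)
  have h2 := key (m/2) (by linarith)
  have hmm : 2 * (m/2) = m := by ring
  rw [hmm] at h2
  have h3 : dq f a u m ≤ dq f a u t := dq_mono hconv hm0 (min_le_left t s)
  have h4 : dq f a v m ≤ dq f a v s := dq_mono hconv hm0 (min_le_right t s)
  linarith

end dd



theorem exists_subgrad_decomp {d n : ℕ} (hn : 0 < n)
    (h : Fin n → EuclideanSpace ℝ (Fin d) → ℝ)
    (hhom : ∀ i (c : ℝ), 0 < c → ∀ v, h i (c • v) = c * h i v)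
    (hadd : ∀ i u v, h i (u + v) ≤ h i u + h i v)
    (hzero : ∀ i, h i 0 = 0)
    (w : EuclideanSpace ℝ (Fin d))
    (hopt : ∀ u, ⟪w, u⟫ ≤ ∑ i, h i u) :
    ∃ g : Fin n → EuclideanSpace ℝ (Fin d),
      (∑ i, g i) = w ∧ ∀ i v, ⟪g i, v⟫ ≤ h i v := by
  classical
  set N : (Fin n → EuclideanSpace ℝ (Fin d)) → ℝ := fun v => ∑ i, h i (v i) with hN
  have N_hom : ∀ c : ℝ, 0 < c → ∀ x, N (c • x) = c * N x := by
    intro c hc x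
    rw [hN, Finset.mul_sum]
    exact Finset.sum_congr rfl fun i _ => hhom i c hc (x i)
  have N_add : ∀ x y, N (x + y) ≤ N x + N y := by
    intro x y
    rw [hN, ← Finset.sum_add_distrib]
    exact Finset.sum_le_sum fun i _ => hadd i (x i) (y i)
  set dg : EuclideanSpace ℝ (Fin d) →ₗ[ℝ] (Fin n → EuclideanSpace ℝ (Fin d)) :=
    LinearMap.pi (fun _ => LinearMap.id) with hdg
  set D : Submodule ℝ (Fin n → EuclideanSpace ℝ (Fin d)) := LinearMap.range dg with hD
  set ψ : (Fin n → EuclideanSpace ℝ (Fin d)) →ₗ[ℝ] ℝ :=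
    { toFun := fun v => (n : ℝ)⁻¹ * ∑ i, ⟪w, v i⟫
      map_add' := by
        intro x y
        simp only [Pi.add_apply, inner_add_right, Finset.sum_add_distrib]
        ring
      map_smul' := by
        intro c x
        simp only [Pi.smul_apply, real_inner_smul_right, ← Finset.mul_sum, RingHom.id_apply,
          smul_eq_mul]
        ring } with hψ
  have hψeq : ∀ u, ψ (dg u) = ⟪w, u⟫ := by
    intro u
    have h1 : ∀ i : Fin n, (dg u) i = u := fun i => rfl
    simp only [hψ, LinearMap.coe_mk, AddHom.coe_mk, h1, Finset.sum_const, Finset.card_univ,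
      Fintype.card_fin, nsmul_eq_mul]
    have hn' : (n : ℝ) ≠ 0 := Nat.cast_ne_zero.2 hn.ne'
    field_simp
  have hf : ∀ x : (LinearPMap.mk D (ψ.comp D.subtype) : _ →ₗ.[ℝ] ℝ).domain,
      (LinearPMap.mk D (ψ.comp D.subtype)) x ≤ N x := by
    rintro ⟨x, u, rfl⟩
    calc (LinearPMap.mk D (ψ.comp D.subtype)) ⟨dg u, u, rfl⟩ = ψ (dg u) := rfl
      _ = ⟪w, u⟫ := hψeq u
      _ ≤ ∑ i, h i u := hopt u
      _ = N (dg u) := rfl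
  obtain ⟨g, hg1, hg2⟩ := exists_extension_of_le_sublinear _ N N_hom N_add hf
  set gi : Fin n → EuclideanSpace ℝ (Fin d) := fun i =>
    (InnerProductSpace.toDual ℝ (EuclideanSpace ℝ (Fin d))).symm
      ((g.comp (LinearMap.single ℝ (fun _ : Fin n => EuclideanSpace ℝ (Fin d)) i)).toContinuousLinearMap) with hgi
  have key : ∀ i v, ⟪gi i, v⟫ = g (Pi.single i v) := by
    intro i v
    simp only [hgi]
    rw [InnerProductSpace.toDual_symm_apply]
    rfl
  refine ⟨gi, ?_, ?_⟩
  · have hsum : ∀ u, ⟪∑ i, gi i, u⟫ = ⟪w, u⟫ := by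
      intro u
      rw [sum_inner]
      rw [Finset.sum_congr rfl fun i _ => key i u, ← map_sum]
      have h4 : (∑ i, Pi.single i u : Fin n → EuclideanSpace ℝ (Fin d)) = dg u := by
        funext j
        rw [Finset.sum_apply]
        simp [Pi.single_apply]
        rfl
      rw [h4]
      have h5 : (dg u) ∈ D := ⟨u, rfl⟩
      have h6 := hg1 ⟨dg u, h5⟩
      calc g (dg u) = ψ (dg u) := h6
        _ = ⟪w, u⟫ := hψeq u
    have hz : ∀ u, ⟪(∑ i, gi i) - w, u⟫ = 0 := by
      intro u; rw [inner_sub_left, hsum, sub_self]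
    have h0 := hz ((∑ i, gi i) - w)
    rw [inner_self_eq_zero] at h0
    exact sub_eq_zero.mp h0
  · intro i v
    rw [key i v]
    refine (hg2 (Pi.single i v)).trans_eq ?_
    simp only [hN]
    rw [Finset.sum_eq_single i]
    · rw [Pi.single_eq_same]
    · intro j _ hj
      rw [Pi.single_eq_of_ne hj, hzero j]
    · intro hi; exact absurd (Finset.mem_univ i) hi


set_option maxHeartbeats 2000000 in
theorem stmt1 (d n : ℕ) (hd : 1 ≤ d) (hn : 1 ≤ n) (M : ℝ) (hM : 0 ≤ M)
    (f : Fin n → EuclideanSpace ℝ (Fin d) → ℝ)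
    (hconv : ∀ i, ConvexOn ℝ Set.univ (f i))
    (hlip : ∀ i x x', |f i x - f i x'| ≤ M * ‖x - x'‖)
    (r rx ryz : ℝ) (hr : 0 < r) (hrx : 0 < rx) (hryz : 0 < ryz)
    (hsum : rx + 1 / ryz = r)
    (p : EuclideanSpace ℝ (Fin d) → ℝ)
    (hp : ∀ x, p x = (n : ℝ)⁻¹ * (∑ i, f i x) + (r / 2) * ‖x‖ ^ 2)
    (F : Vec d n → ℝ) (hF : ∀ x, F x = (∑ i, f i (x i)) + (rx / 2) * ‖x‖ ^ 2)
    (xstar : EuclideanSpace ℝ (Fin d))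
    (hmin : ∀ x, p xstar ≤ p x)
    (huniq : ∀ x, (∀ x', p x ≤ p x') → x = xstar)
    (wstar : Vec d n)
    (hw : wstar = (WithLp.equiv 2 (∀ _ : Fin n, EuclideanSpace ℝ (Fin d))).symm
      fun _ => xstar) :
    ∃ ystar zstar : Vec d n,
      (∑ i, zstar i) = 0 ∧
      (∀ x', F x' ≥ F wstar + ⟪ystar, x' - wstar⟫) ∧
      wstar + ryz • (ystar + zstar) = 0 ∧
      (∀ i j, (ryz • (ystar + zstar)) i = (ryz • (ystar + zstar)) j) ∧
      ‖wstar‖ ^ 2 ≤ n * M ^ 2 / r ^ 2 ∧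
      ‖ystar‖ ^ 2 ≤ (1 + rx / r) ^ 2 * (n * M ^ 2) ∧
      ‖zstar‖ ^ 2 ≤ 4 * n * M ^ 2 := by
  classical
  have hn0 : 0 < n := hn
  have hn' : (0 : ℝ) < n := by exact_mod_cast hn0
  -- Step 1: optimality inequality for difference quotients
  have key : ∀ (u : EuclideanSpace ℝ (Fin d)) (t : ℝ), 0 < t →
      -((n : ℝ) * r) * ⟪xstar, u⟫ - (n * r * t / 2) * ‖u‖ ^ 2
        ≤ ∑ i, dq (f i) xstar u t := by
    intro u t ht
    have hm := hmin (xstar + t • u)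
    rw [hp xstar, hp (xstar + t • u)] at hm
    have hexp : ‖xstar + t • u‖ ^ 2
        = ‖xstar‖ ^ 2 + 2 * (t * ⟪xstar, u⟫) + t ^ 2 * ‖u‖ ^ 2 := by
      rw [norm_add_sq_real, real_inner_smul_right, norm_smul, Real.norm_eq_abs,
        mul_pow, sq_abs]
    rw [hexp] at hm
    have hsd : ∑ i, dq (f i) xstar u t
        = ((∑ i, f i (xstar + t • u)) - ∑ i, f i xstar) / t := by
      rw [← Finset.sum_sub_distrib, Finset.sum_div]
      rfl
    rw [hsd, le_div_iff₀ ht]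
    have h7 : (n : ℝ)⁻¹ * ((∑ i, f i xstar) - ∑ i, f i (xstar + t • u))
        ≤ (r / 2) * (2 * (t * ⟪xstar, u⟫) + t ^ 2 * ‖u‖ ^ 2) := by linarith
    have h8 := mul_le_mul_of_nonneg_left h7 hn'.le
    rw [← mul_assoc, mul_inv_cancel₀ hn'.ne', one_mul] at h8
    nlinarith [h8]
  -- Step 2: optimality inequality for directional derivatives
  have hopt : ∀ u, ⟪-((n : ℝ) * r) • xstar, u⟫ ≤ ∑ i, dd (f i) xstar u := by
    intro u
    rw [real_inner_smul_left]
    apply le_of_forall_pos_le_add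
    intro ε hε
    have hne : Nonempty (Fin n) := Fin.pos_iff_nonempty.mp hn0
    have hε2 : (0 : ℝ) < ε / (2 * n) := by positivity
    choose t ht1 ht2 using fun i : Fin n =>
      dd_exists_dq_lt (f := f i) (a := xstar) (hlip i) u hε2
    set δ : ℝ := ε / ((n : ℝ) * r * (‖u‖ ^ 2 + 1)) with hδ
    have hδ0 : 0 < δ := by positivity
    set T : ℝ := min δ (Finset.univ.inf' (Finset.univ_nonempty) t) with hT
    have hT0 : 0 < T := by
      rw [hT]
      apply lt_min hδ0
      rw [Finset.lt_inf'_iff]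
      exact fun i _ => ht1 i
    have hTi : ∀ i, dq (f i) xstar u T ≤ dq (f i) xstar u (t i) := by
      intro i
      refine dq_mono (hconv i) hT0 ?_
      exact (min_le_right _ _).trans (Finset.inf'_le _ (Finset.mem_univ i))
    have hsum1 : ∑ i, dq (f i) xstar u T ≤ (∑ i, dd (f i) xstar u) + ε / 2 := by
      have : ∑ i, dq (f i) xstar u T
          ≤ ∑ i, (dd (f i) xstar u + ε / (2 * n)) :=
        Finset.sum_le_sum fun i _ => (hTi i).trans (ht2 i).le
      rw [Finset.sum_add_distrib, Finset.sum_const, Finset.card_univ,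
        Fintype.card_fin, nsmul_eq_mul] at this
      have hc : (n : ℝ) * (ε / (2 * n)) = ε / 2 := by field_simp
      linarith [this, hc.le, hc.ge]
    have hkey := key u T hT0
    have hTδ : T ≤ δ := min_le_left _ _
    have h9 : (n : ℝ) * r * T / 2 * ‖u‖ ^ 2 ≤ ε / 2 := by
      have h10 : δ * ((n : ℝ) * r * ‖u‖ ^ 2) ≤ ε := by
        rw [hδ, div_mul_eq_mul_div, div_le_iff₀ (by positivity)]
        nlinarith [sq_nonneg ‖u‖, hε.le, mul_pos hn' hr]
      nlinarith [mul_pos hn' hr, sq_nonneg ‖u‖, mul_le_mul_of_nonneg_right hTδ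
        (mul_nonneg (mul_nonneg hn'.le hr.le) (sq_nonneg ‖u‖))]
    linarith
  -- Step 3: decompose into subgradients
  have hdd_hom : ∀ i (c : ℝ), 0 < c → ∀ v,
      dd (f i) xstar (c • v) = c * dd (f i) xstar v :=
    fun i c hc v => dd_smul (hlip i) v hc
  have hdd_add : ∀ i u v, dd (f i) xstar (u + v)
      ≤ dd (f i) xstar u + dd (f i) xstar v :=
    fun i u v => dd_add (hconv i) (hlip i) u v
  have hdd_zero : ∀ i, dd (f i) xstar (0 : EuclideanSpace ℝ (Fin d)) = 0 :=
    fun i => dd_zero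
  obtain ⟨g, hgsum, hgle⟩ := exists_subgrad_decomp hn0 (fun i => dd (f i) xstar)
    hdd_hom hdd_add hdd_zero (-((n : ℝ) * r) • xstar) hopt
  -- basic consequences
  have hsubg : ∀ i v, ⟪g i, v⟫ ≤ f i (xstar + v) - f i xstar :=
    fun i v => (hgle i v).trans (dd_le_sub (hlip i) v)
  have hgnorm : ∀ i, ‖g i‖ ≤ M := by
    intro i
    have h1 : ⟪g i, g i⟫ ≤ M * ‖g i‖ :=
      (hgle i (g i)).trans (dd_le_lin (hlip i) (g i))
    rw [real_inner_self_eq_norm_sq] at h1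
    nlinarith [norm_nonneg (g i)]
  have hxnorm : ‖xstar‖ ≤ M / r := by
    have h1 : ‖∑ i, g i‖ ≤ ∑ i, ‖g i‖ := norm_sum_le _ _
    rw [hgsum] at h1
    have h2 : ‖-((n : ℝ) * r) • xstar‖ = (n : ℝ) * r * ‖xstar‖ := by
      rw [norm_smul, norm_neg, Real.norm_eq_abs, abs_of_pos (mul_pos hn' hr)]
    rw [h2] at h1
    have h3 : (∑ i, ‖g i‖ : ℝ) ≤ n * M := by
      calc (∑ i, ‖g i‖ : ℝ) ≤ ∑ _i : Fin n, M := Finset.sum_le_sum fun i _ => hgnorm i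
        _ = n * M := by rw [Finset.sum_const, Finset.card_univ, Fintype.card_fin, nsmul_eq_mul]
    rw [le_div_iff₀ hr]
    have h4 : (n : ℝ) * (r * ‖xstar‖) ≤ (n : ℝ) * M := by
      have := h1.trans h3
      linarith [this, (mul_assoc (n : ℝ) r ‖xstar‖)]
    have h5 := le_of_mul_le_mul_left h4 hn'
    linarith [h5, mul_comm r ‖xstar‖]
  have hryzinv : ryz⁻¹ = r - rx := by
    rw [one_div] at hsum; linarith
  -- the witnesses
  set ystar : Vec d n := (WithLp.equiv 2 (∀ _ : Fin n, EuclideanSpace ℝ (Fin d))).symm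
    (fun i => g i + rx • xstar) with hy
  set zstar : Vec d n := (WithLp.equiv 2 (∀ _ : Fin n, EuclideanSpace ℝ (Fin d))).symm
    (fun i => -(ryz⁻¹ • xstar) - (g i + rx • xstar)) with hz
  have hyc : ∀ i, ystar i = g i + rx • xstar := fun i => rfl
  have hzc : ∀ i, zstar i = -(ryz⁻¹ • xstar) - (g i + rx • xstar) := fun i => rfl
  have hwc : ∀ i, wstar i = xstar := by intro i; rw [hw]; rfl
  have hzc' : ∀ i, zstar i = -(g i + r • xstar) := by
    intro i
    rw [hzc i, hryzinv]
    module
  refine ⟨ystar, zstar, ?_, ?_, ?_, ?_, ?_, ?_, ?_⟩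
  · -- sum of zstar is zero
    have : ∑ i, zstar i
        = ∑ i : Fin n, (-(ryz⁻¹ • xstar)) - ((∑ i, g i) + ∑ i : Fin n, rx • xstar) := by
      rw [Finset.sum_congr rfl fun i _ => hzc i, Finset.sum_sub_distrib,
        Finset.sum_add_distrib]
    rw [this, hgsum, Finset.sum_const, Finset.sum_const, Finset.card_univ, Fintype.card_fin]
    have hcoef : -((n : ℝ) * ryz⁻¹) - (-((n : ℝ) * r) + (n : ℝ) * rx) = 0 := by
      rw [hryzinv]; ring
    have hexpand : (n • (-(ryz⁻¹ • xstar)) : EuclideanSpace ℝ (Fin d))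
          - (-((n : ℝ) * r) • xstar + n • (rx • xstar))
        = (-((n : ℝ) * ryz⁻¹) - (-((n : ℝ) * r) + (n : ℝ) * rx)) • xstar := by
      push_cast
      module
    rw [hexpand, hcoef, zero_smul]
  · -- subgradient inequality
    intro x'
    rw [ge_iff_le, hF x', hF wstar, PiLp.inner_apply,
      PiLp.norm_sq_eq_of_L2, PiLp.norm_sq_eq_of_L2]
    have hcoord : ∀ i : Fin n, ⟪ystar i, (x' - wstar) i⟫ = ⟪g i + rx • xstar, x' i - xstar⟫ := by
      intro i
      have : (x' - wstar) i = x' i - wstar i := rfl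
      rw [this, hyc i, hwc i]
    rw [Finset.sum_congr rfl fun i (_ : i ∈ Finset.univ) => hcoord i]
    rw [Finset.sum_congr rfl fun i (_ : i ∈ Finset.univ) => congrArg (‖·‖ ^ 2) (hwc i)]
    rw [Finset.sum_congr rfl fun i (_ : i ∈ Finset.univ) => congrArg (f i) (hwc i)]
    rw [Finset.mul_sum, Finset.mul_sum, ← Finset.sum_add_distrib, ← Finset.sum_add_distrib,
      ← Finset.sum_add_distrib]
    refine Finset.sum_le_sum fun i _ => ?_
    have hs := hsubg i (x' i - xstar)
    rw [add_sub_cancel] at hs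
    have hinner : ⟪g i + rx • xstar, x' i - xstar⟫
        = ⟪g i, x' i - xstar⟫ + rx * (⟪xstar, x' i⟫ - ‖xstar‖ ^ 2) := by
      rw [inner_add_left]
      congr 1
      rw [real_inner_smul_left, inner_sub_right, real_inner_self_eq_norm_sq]
    have hq : ‖x' i - xstar‖ ^ 2 = ‖x' i‖ ^ 2 - 2 * ⟪x' i, xstar⟫ + ‖xstar‖ ^ 2 :=
      norm_sub_sq_real _ _
    have hcomm : ⟪xstar, x' i⟫ = ⟪x' i, xstar⟫ := real_inner_comm _ _
    rw [hinner, hcomm]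
    nlinarith [mul_nonneg hrx.le (sq_nonneg ‖x' i - xstar‖), hq, hs]
  · -- stationarity
    rw [hw]
    apply (WithLp.equiv 2 (∀ _ : Fin n, EuclideanSpace ℝ (Fin d))).injective
    funext i
    show xstar + ryz • (ystar i + zstar i) = 0
    rw [hyc i, hzc i]
    have : (g i + rx • xstar) + (-(ryz⁻¹ • xstar) - (g i + rx • xstar))
        = -(ryz⁻¹ • xstar) := by abel
    rw [this, smul_neg, smul_smul, mul_inv_cancel₀ hryz.ne', one_smul]
    abel
  · -- constancy
    intro i j
    show ryz • (ystar i + zstar i) = ryz • (ystar j + zstar j)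
    rw [hyc i, hzc i, hyc j, hzc j]
    congr 1
    abel
  · -- norm of wstar
    rw [PiLp.norm_sq_eq_of_L2]
    rw [Finset.sum_congr rfl fun i (_ : i ∈ Finset.univ) => congrArg (‖·‖ ^ 2) (hwc i)]
    rw [Finset.sum_const, Finset.card_univ, Fintype.card_fin, nsmul_eq_mul]
    have h1 : ‖xstar‖ ^ 2 ≤ M ^ 2 / r ^ 2 := by
      have := pow_le_pow_left₀ (norm_nonneg xstar) hxnorm 2
      rwa [div_pow] at this
    calc (n : ℝ) * ‖xstar‖ ^ 2 ≤ (n : ℝ) * (M ^ 2 / r ^ 2) :=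
          mul_le_mul_of_nonneg_left h1 hn'.le
      _ = n * M ^ 2 / r ^ 2 := by ring
  · -- norm of ystar
    rw [PiLp.norm_sq_eq_of_L2]
    have hb : ∀ i : Fin n, ‖ystar i‖ ^ 2 ≤ (M * (1 + rx / r)) ^ 2 := by
      intro i
      have h1 : ‖ystar i‖ ≤ M * (1 + rx / r) := by
        rw [hyc i]
        calc ‖g i + rx • xstar‖ ≤ ‖g i‖ + ‖rx • xstar‖ := norm_add_le _ _
          _ = ‖g i‖ + rx * ‖xstar‖ := by
              rw [norm_smul, Real.norm_eq_abs, abs_of_pos hrx]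
          _ ≤ M + rx * (M / r) := by
              have := mul_le_mul_of_nonneg_left hxnorm hrx.le
              linarith [hgnorm i]
          _ = M * (1 + rx / r) := by field_simp
      exact pow_le_pow_left₀ (norm_nonneg _) h1 2
    calc ∑ i, ‖ystar i‖ ^ 2 ≤ ∑ _i : Fin n, (M * (1 + rx / r)) ^ 2 :=
          Finset.sum_le_sum fun i _ => hb i
      _ = (n : ℝ) * (M * (1 + rx / r)) ^ 2 := by
          rw [Finset.sum_const, Finset.card_univ, Fintype.card_fin, nsmul_eq_mul]
      _ = (1 + rx / r) ^ 2 * (n * M ^ 2) := by ring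
  · -- norm of zstar
    rw [PiLp.norm_sq_eq_of_L2]
    have hb : ∀ i : Fin n, ‖zstar i‖ ^ 2 ≤ (2 * M) ^ 2 := by
      intro i
      have h1 : ‖zstar i‖ ≤ 2 * M := by
        rw [hzc' i, norm_neg]
        calc ‖g i + r • xstar‖ ≤ ‖g i‖ + ‖r • xstar‖ := norm_add_le _ _
          _ = ‖g i‖ + r * ‖xstar‖ := by
              rw [norm_smul, Real.norm_eq_abs, abs_of_pos hr]
          _ ≤ M + r * (M / r) := by
              have := mul_le_mul_of_nonneg_left hxnorm hr.le
              linarith [hgnorm i]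
          _ = 2 * M := by field_simp; ring
      exact pow_le_pow_left₀ (norm_nonneg _) h1 2
    calc ∑ i, ‖zstar i‖ ^ 2 ≤ ∑ _i : Fin n, (2 * M) ^ 2 :=
          Finset.sum_le_sum fun i _ => hb i
      _ = (n : ℝ) * (2 * M) ^ 2 := by
          rw [Finset.sum_const, Finset.card_univ, Fintype.card_fin, nsmul_eq_mul]
      _ = 4 * n * M ^ 2 := by ring

end
end

section
/- Let d ≥ 2 and a, r > 0, and define p : ℝ^d → ℝ by p(x) = (a/3)∑_{j=1}^{d−1} h_j(x) − (a/3)⟨e_1, x⟩ + (r/2)‖x‖². Then p has the unique minimizer x* = (a/(3rd))·1_d (the vector with all coordinates equal to a/(3rd)), p(x*) = −a²/(18rd), and every x ∈ ℝ^d with ⟨e_d, x⟩ = 0 satisfies p(x) ≥ 0; consequently p(x) − p(x*) ≥ a²/(18rd) for every x with ⟨e_d, x⟩ = 0. -/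
open scoped BigOperators RealInnerProductSpace

noncomputable section

/-- The `k`-th standard basis vector of `ℝ^d`, `0`-indexed (so the paper's `e_k` is
`stdBasis d (k-1)`); out-of-range indices give `0`. -/
def stdBasis (d j : ℕ) : EuclideanSpace ℝ (Fin d) :=
  if h : j < d then EuclideanSpace.single ⟨j, h⟩ 1 else 0

/-- The `j`-th coordinate of `x`, as a function of a natural number index. -/
def Xc (d : ℕ) (x : EuclideanSpace ℝ (Fin d)) (j : ℕ) : ℝ :=
  if h : j < d then x ⟨j, h⟩ else 0

lemma Xc_of_lt (d : ℕ) (x : EuclideanSpace ℝ (Fin d)) (j : ℕ) (h : j < d) :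
    Xc d x j = x ⟨j, h⟩ := dif_pos h

/-- Telescoping estimate. -/
lemma tele_aux (X : ℕ → ℝ) (k : ℕ) :
    X 0 - X k ≤ ∑ j ∈ Finset.Icc 1 k, |X j - X (j - 1)| := by
  induction k with
  | zero => simp
  | succ n ih =>
    rw [Finset.sum_Icc_succ_top (by omega : 1 ≤ n + 1)]
    have h2 : X n - X (n + 1) ≤ |X (n + 1) - X (n + 1 - 1)| := by
      simp only [Nat.add_sub_cancel]
      rw [abs_sub_comm]
      exact le_abs_self _
    have h3 : X 0 - X (n + 1) = (X 0 - X n) + (X n - X (n + 1)) := by ring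
    linarith

lemma tele (d : ℕ) (X : ℕ → ℝ) (k : ℕ) (hk : k ≤ d - 1) :
    X 0 - X k ≤ ∑ j ∈ Finset.Icc 1 (d - 1), |X j - X (j - 1)| := by
  refine (tele_aux X k).trans ?_
  exact Finset.sum_le_sum_of_subset_of_nonneg
    (Finset.Icc_subset_Icc_right hk) (fun j _ _ => abs_nonneg _)

theorem stmt2 (d : ℕ) (hd : 2 ≤ d) (a r : ℝ) (ha : 0 < a) (hr : 0 < r)
    (p : EuclideanSpace ℝ (Fin d) → ℝ)
    (hp : ∀ x, p x =
      (a / 3) * ∑ j ∈ Finset.Icc 1 (d - 1), |⟪stdBasis d j - stdBasis d (j - 1), x⟫|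
        - (a / 3) * ⟪stdBasis d 0, x⟫ + (r / 2) * ‖x‖ ^ 2)
    (xstar : EuclideanSpace ℝ (Fin d))
    (hxstar : xstar = (WithLp.equiv 2 (Fin d → ℝ)).symm fun _ => a / (3 * r * d)) :
    (∀ x, p xstar ≤ p x) ∧
    (∀ x, p x = p xstar → x = xstar) ∧
    p xstar = -(a ^ 2 / (18 * r * d)) ∧
    (∀ x, ⟪stdBasis d (d - 1), x⟫ = 0 → 0 ≤ p x) ∧
    (∀ x, ⟪stdBasis d (d - 1), x⟫ = 0 → a ^ 2 / (18 * r * d) ≤ p x - p xstar) := by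
  have hd0 : (0:ℝ) < d := by exact_mod_cast Nat.pos_of_ne_zero (by omega)
  set t0 : ℝ := a / (3 * r * d) with ht0
  have hxs : ∀ i : Fin d, xstar i = t0 := fun i => by rw [hxstar]; rfl
  have hinner : ∀ (j : ℕ) (hj : j < d) (v : EuclideanSpace ℝ (Fin d)),
      ⟪stdBasis d j, v⟫ = v ⟨j, hj⟩ := by
    intro j hj v
    rw [stdBasis, dif_pos hj, EuclideanSpace.inner_single_left]
    simp
  -- coordinate form of p
  have hcoord : ∀ x : EuclideanSpace ℝ (Fin d), p x =
      (a / 3) * (∑ j ∈ Finset.Icc 1 (d - 1), |Xc d x j - Xc d x (j - 1)|)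
        - (a / 3) * Xc d x 0 + (r / 2) * ∑ i, (x i) ^ 2 := by
    intro x
    rw [hp]
    have h1 : ∑ j ∈ Finset.Icc 1 (d - 1), |⟪stdBasis d j - stdBasis d (j - 1), x⟫|
        = ∑ j ∈ Finset.Icc 1 (d - 1), |Xc d x j - Xc d x (j - 1)| := by
      refine Finset.sum_congr rfl (fun j hj => ?_)
      obtain ⟨hj1, hj2⟩ := Finset.mem_Icc.mp hj
      have hjd : j < d := by omega
      have hjd' : j - 1 < d := by omega
      rw [inner_sub_left, hinner j hjd, hinner (j - 1) hjd',
        Xc_of_lt d x j hjd, Xc_of_lt d x (j - 1) hjd']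
    have h2 : ⟪stdBasis d 0, x⟫ = Xc d x 0 := by
      rw [hinner 0 (by omega), Xc_of_lt d x 0 (by omega)]
    have h3 : ‖x‖ ^ 2 = ∑ i, (x i) ^ 2 := by
      rw [PiLp.norm_sq_eq_of_L2]
      simp [Real.norm_eq_abs, sq_abs]
    rw [h1, h2, h3]
  -- key averaging inequality
  have key1 : ∀ x : EuclideanSpace ℝ (Fin d),
      (d : ℝ) * Xc d x 0 - (∑ i, x i)
        ≤ d * ∑ j ∈ Finset.Icc 1 (d - 1), |Xc d x j - Xc d x (j - 1)| := by
    intro x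
    have h1 : ∀ i : Fin d, Xc d x 0 - x i
        ≤ ∑ j ∈ Finset.Icc 1 (d - 1), |Xc d x j - Xc d x (j - 1)| := by
      intro i
      have h := tele d (Xc d x) i (by omega : (i : ℕ) ≤ d - 1)
      rwa [Xc_of_lt d x i i.isLt, Fin.eta] at h
    calc (d : ℝ) * Xc d x 0 - ∑ i, x i = ∑ _i : Fin d, Xc d x 0 - ∑ i, x i := by
          rw [Finset.sum_const, Finset.card_univ, Fintype.card_fin, nsmul_eq_mul]
      _ = ∑ i : Fin d, (Xc d x 0 - x i) := by rw [Finset.sum_sub_distrib]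
      _ ≤ ∑ _i : Fin d, ∑ j ∈ Finset.Icc 1 (d - 1), |Xc d x j - Xc d x (j - 1)| :=
          Finset.sum_le_sum fun i _ => h1 i
      _ = d * ∑ j ∈ Finset.Icc 1 (d - 1), |Xc d x j - Xc d x (j - 1)| := by
          rw [Finset.sum_const, Finset.card_univ, Fintype.card_fin, nsmul_eq_mul]
  -- quadratic expansion
  have hQ : ∀ x : EuclideanSpace ℝ (Fin d),
      ∑ i, (x i - t0) ^ 2 = (∑ i, (x i) ^ 2) - 2 * t0 * (∑ i, x i) + d * t0 ^ 2 := by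
    intro x
    have h : ∀ i : Fin d, (x i - t0) ^ 2 = (x i) ^ 2 - (2 * t0) * x i + t0 ^ 2 :=
      fun i => by ring
    rw [Finset.sum_congr rfl fun i _ => h i, Finset.sum_add_distrib,
      Finset.sum_sub_distrib, ← Finset.mul_sum, Finset.sum_const, Finset.card_univ,
      Fintype.card_fin, nsmul_eq_mul]
  -- value at xstar
  have hSstar : ∑ j ∈ Finset.Icc 1 (d - 1), |Xc d xstar j - Xc d xstar (j - 1)| = 0 := by
    refine Finset.sum_eq_zero fun j hj => ?_
    obtain ⟨hj1, hj2⟩ := Finset.mem_Icc.mp hj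
    rw [Xc_of_lt d xstar j (by omega), Xc_of_lt d xstar (j - 1) (by omega), hxs, hxs]
    simp
  have hQstar : ∑ i, (xstar i) ^ 2 = d * t0 ^ 2 := by
    simp only [hxs]
    rw [Finset.sum_const, Finset.card_univ, Fintype.card_fin, nsmul_eq_mul]
  have hX0star : Xc d xstar 0 = t0 := by
    rw [Xc_of_lt d xstar 0 (by omega), hxs]
  have hpstar : p xstar = -(a / 3) * t0 + (r / 2) * ((d : ℝ) * t0 ^ 2) := by
    rw [hcoord xstar, hSstar, hX0star, hQstar]; ring
  have hpstarval : p xstar = -(a ^ 2 / (18 * r * d)) := by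
    rw [hpstar, ht0]
    field_simp
    ring
  -- main lower bound
  have hlow : ∀ x : EuclideanSpace ℝ (Fin d),
      p xstar + (r / 2) * ∑ i, (x i - t0) ^ 2 ≤ p x := by
    intro x
    have hk := key1 x
    have e : p x - (p xstar + (r / 2) * ∑ i, (x i - t0) ^ 2)
        = (a / (3 * d)) * ((d * (∑ j ∈ Finset.Icc 1 (d - 1),
            |Xc d x j - Xc d x (j - 1)|) - d * Xc d x 0) + ∑ i, x i) := by
      rw [hcoord x, hpstar, hQ x, ht0]
      field_simp
      ring
    have h2 : 0 ≤ p x - (p xstar + (r / 2) * ∑ i, (x i - t0) ^ 2) := by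
      rw [e]
      exact mul_nonneg (by positivity) (by linarith)
    linarith
  have hsumsq : ∀ x : EuclideanSpace ℝ (Fin d), 0 ≤ ∑ i, (x i - t0) ^ 2 :=
    fun x => Finset.sum_nonneg fun i _ => sq_nonneg _
  -- part 4
  have part4 : ∀ x, ⟪stdBasis d (d - 1), x⟫ = 0 → 0 ≤ p x := by
    intro x hx
    have hXd1 : Xc d x (d - 1) = 0 := by
      rw [Xc_of_lt d x (d - 1) (by omega), ← hinner (d - 1) (by omega) x, hx]
    have htel := tele d (Xc d x) (d - 1) le_rfl
    rw [hXd1, sub_zero] at htel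
    have hQnn : (0:ℝ) ≤ ∑ i, (x i) ^ 2 := Finset.sum_nonneg fun i _ => sq_nonneg _
    rw [hcoord x]
    nlinarith [htel, hQnn]
  refine ⟨?_, ?_, hpstarval, part4, ?_⟩
  · intro x
    have h := hlow x
    have h2 : 0 ≤ (r / 2) * ∑ i, (x i - t0) ^ 2 :=
      mul_nonneg (by positivity) (hsumsq x)
    linarith
  · intro x hx
    have h := hlow x
    rw [hx] at h
    have h2 : ∑ i, (x i - t0) ^ 2 ≤ 0 := by nlinarith
    have h3 : ∑ i, (x i - t0) ^ 2 = 0 := le_antisymm h2 (hsumsq x)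
    have h4 : ∀ i ∈ Finset.univ, (x i - t0) ^ 2 = 0 :=
      (Finset.sum_eq_zero_iff_of_nonneg fun i _ => sq_nonneg _).mp h3
    ext i
    have h5 : (x i - t0) ^ 2 = 0 := h4 i (Finset.mem_univ i)
    have h6 : x i = t0 := by
      have := pow_eq_zero_iff (n := 2) (by norm_num) |>.mp h5
      linarith
    rw [h6, ← hxs i]
  · intro x hx
    have h := part4 x hx
    rw [hpstarval]
    linarith

end
end

section
/- Let n ≥ 3 and c ∈ {1,…,n}. Define W ∈ ℝ^{n×n} by W_{ij} = (1/n)·deg_i if i = j, W_{ij} = −1/n if i ≠ j and (i = c or j = c), and W_{ij} = 0 otherwise, where deg_c = n − 1 and deg_i = 1 for i ≠ c (the scaled Laplacian of the star graph with center c). Then W is symmetric, W·1_n = 0 and Wᵀ·1_n = 0, and for every x ∈ ℝ^n with ∑_{i=1}^n x_i = 0 one has ‖Wx − x‖² ≤ (1 − 1/n)‖x‖². -/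
open scoped BigOperators
open Matrix

noncomputable section

theorem stmt6 (n : ℕ) (hn : 3 ≤ n) (c : Fin n)
    (W : Matrix (Fin n) (Fin n) ℝ)
    (hW : ∀ i j, W i j =
      if i = j then (if i = c then ((n : ℝ) - 1) / n else 1 / n)
      else if i = c ∨ j = c then -(1 / n) else 0) :
    W.IsSymm ∧
    W.mulVec (fun _ => 1) = 0 ∧
    Wᵀ.mulVec (fun _ => 1) = 0 ∧
    ∀ x : EuclideanSpace ℝ (Fin n), (∑ i, x i) = 0 →
      ‖(WithLp.equiv 2 (Fin n → ℝ)).symm (W.mulVec ((WithLp.equiv 2 (Fin n → ℝ)) x)) - x‖ ^ 2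
        ≤ (1 - 1 / n) * ‖x‖ ^ 2 := by
  set N : ℝ := (n : ℝ) with hNdef
  have hN3 : (3 : ℝ) ≤ N := by rw [hNdef]; exact_mod_cast hn
  have hN0 : (0 : ℝ) < N := by linarith
  have hNne : N ≠ 0 := ne_of_gt hN0
  -- decomposition of row c
  have hrowc : ∀ j, W c j = (if c = j then (1:ℝ) else 0) - 1/N := by
    intro j
    rw [hW]
    by_cases h : c = j
    · subst h; simp; field_simp
    · simp [h]
  -- decomposition of row i ≠ c
  have hrowi : ∀ i, i ≠ c → ∀ j, W i j =
      (if i = j then (1:ℝ)/N else 0) + (if j = c then -(1/N) else 0) := by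
    intro i hi j
    rw [hW]
    by_cases h1 : i = j
    · subst h1; simp [hi]
    · by_cases h2 : j = c <;> simp [h1, h2, hi]
  have hsym : W.IsSymm := by
    unfold Matrix.IsSymm
    ext i j
    rw [Matrix.transpose_apply, hW, hW]
    by_cases h : i = j
    · simp [h]
    · simp [h, Ne.symm h, or_comm]
  have rowsum : ∀ i, ∑ j, W i j = 0 := by
    intro i
    by_cases hi : i = c
    · rw [hi]
      calc ∑ j, W c j = ∑ j, ((if c = j then (1:ℝ) else 0) - 1/N) := by
            exact Finset.sum_congr rfl (fun j _ => hrowc j)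
        _ = (∑ j, (if c = j then (1:ℝ) else 0)) - ∑ _j : Fin n, 1/N := by
            rw [Finset.sum_sub_distrib]
        _ = 1 - N * (1/N) := by
            simp [Finset.sum_ite_eq, hNdef]
        _ = 0 := by field_simp; ring
    · calc ∑ j, W i j
          = ∑ j, ((if i = j then (1:ℝ)/N else 0) + (if j = c then -(1/N) else 0)) := by
            exact Finset.sum_congr rfl (fun j _ => hrowi i hi j)
        _ = (∑ j, (if i = j then (1:ℝ)/N else 0)) + ∑ j, (if j = c then -(1/N) else 0) := by
            rw [Finset.sum_add_distrib]
        _ = 1/N + -(1/N) := by simp [Finset.sum_ite_eq]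
        _ = 0 := by ring
  have hmul1 : W.mulVec (fun _ => 1) = 0 := by
    funext i
    simp only [Matrix.mulVec, dotProduct, mul_one, Pi.zero_apply]
    exact rowsum i
  refine ⟨hsym, hmul1, by rw [hsym.eq]; exact hmul1, ?_⟩
  intro x hx
  -- compute mulVec entries
  have hWx : ∀ i, W.mulVec (fun j => x j) i = if i = c then x c else (x i - x c)/N := by
    intro i
    simp only [Matrix.mulVec, dotProduct]
    by_cases hi : i = c
    · rw [hi, if_pos rfl]
      calc ∑ j, W c j * x j = ∑ j, (((if c = j then (1:ℝ) else 0) - 1/N) * x j) := by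
            exact Finset.sum_congr rfl (fun j _ => by rw [hrowc j])
        _ = (∑ j, (if c = j then (1:ℝ) else 0) * x j) - (1/N) * ∑ j, x j := by
            rw [Finset.mul_sum, ← Finset.sum_sub_distrib]
            exact Finset.sum_congr rfl (fun j _ => by ring)
        _ = x c := by
            rw [hx]
            simp [Finset.sum_ite_eq]
    · rw [if_neg hi]
      calc ∑ j, W i j * x j
          = ∑ j, (((if i = j then (1:ℝ)/N else 0) + (if j = c then -(1/N) else 0)) * x j) := by
            exact Finset.sum_congr rfl (fun j _ => by rw [hrowi i hi j])
        _ = (∑ j, (if i = j then (1:ℝ)/N else 0) * x j)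
              + ∑ j, (if j = c then -(1/N) else 0) * x j := by
            rw [← Finset.sum_add_distrib]
            exact Finset.sum_congr rfl (fun j _ => by ring)
        _ = (1/N) * x i + -(1/N) * x c := by
            simp [Finset.sum_ite_eq, Finset.sum_ite_eq']
        _ = (x i - x c)/N := by ring
  have hnormsq : ∀ y : EuclideanSpace ℝ (Fin n), ‖y‖ ^ 2 = ∑ i, (y i) ^ 2 := by
    intro y
    rw [EuclideanSpace.norm_eq, Real.sq_sqrt (by positivity)]
    exact Finset.sum_congr rfl (fun i _ => by rw [Real.norm_eq_abs, sq_abs])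
  rw [hnormsq, hnormsq]
  have hcoord : ∀ i, ((WithLp.equiv 2 (Fin n → ℝ)).symm
      (W.mulVec ((WithLp.equiv 2 (Fin n → ℝ)) x)) - x) i
      = W.mulVec (fun j => x j) i - x i := by
    intro i; rfl
  have hmem : c ∈ Finset.univ := Finset.mem_univ c
  set t := x c with ht
  set S' := ∑ i ∈ Finset.univ.erase c, (x i)^2 with hS'
  have hS'nonneg : 0 ≤ S' := Finset.sum_nonneg (fun i _ => sq_nonneg _)
  have hsum_erase : ∑ i ∈ Finset.univ.erase c, x i = -t := by
    have := Finset.add_sum_erase Finset.univ x hmem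
    rw [hx] at this
    linarith
  have hSsplit : ∑ i, (x i)^2 = t^2 + S' := by
    rw [hS', ← Finset.add_sum_erase Finset.univ (fun i => (x i)^2) hmem]
  have hLHS : ∑ i, ((WithLp.equiv 2 (Fin n → ℝ)).symm
      (W.mulVec ((WithLp.equiv 2 (Fin n → ℝ)) x)) - x) i ^ 2
      = ((N-1)^2 * S' - (N-1) * t^2) / N^2 := by
    rw [← Finset.add_sum_erase Finset.univ _ hmem]
    have h1 : ((WithLp.equiv 2 (Fin n → ℝ)).symm
        (W.mulVec ((WithLp.equiv 2 (Fin n → ℝ)) x)) - x) c ^ 2 = 0 := by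
      rw [hcoord, hWx]; simp [ht]
    rw [h1, zero_add]
    have h2 : ∀ i ∈ Finset.univ.erase c,
        ((WithLp.equiv 2 (Fin n → ℝ)).symm
          (W.mulVec ((WithLp.equiv 2 (Fin n → ℝ)) x)) - x) i ^ 2
        = ((N-1)^2/N^2) * (x i)^2 + (2*(N-1)*t/N^2) * x i + t^2/N^2 := by
      intro i hi
      have hic : i ≠ c := Finset.ne_of_mem_erase hi
      rw [hcoord, hWx, if_neg hic]
      field_simp
      ring
    rw [Finset.sum_congr rfl h2]
    rw [Finset.sum_add_distrib, Finset.sum_add_distrib, ← Finset.mul_sum, ← Finset.mul_sum,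
      Finset.sum_const, Finset.card_erase_of_mem hmem, Finset.card_univ, Fintype.card_fin]
    rw [hsum_erase]
    have hcard : ((n - 1 : ℕ) : ℝ) = N - 1 := by
      rw [Nat.cast_sub (by omega)]; simp [hNdef]
    rw [nsmul_eq_mul, hcard, ← hS']
    field_simp
    ring
  rw [hLHS, hSsplit]
  rw [div_le_iff₀ (by positivity)]
  have hrhs : (1 - 1/N) * (t^2 + S') * N^2 = N * (N-1) * (t^2 + S') := by
    field_simp
  rw [hrhs]
  nlinarith [sq_nonneg t, hS'nonneg, hN3]

end
end

section
/- Let d, n ≥ 1, M ≥ 0, let each f_i : ℝ^d → ℝ be convex and M-Lipschitz, and let ∇̂f_i : ℝ^d → ℝ^d satisfy f_i(x') ≥ f_i(u) + ⟨∇̂f_i(u), x' − u⟩ for all u, x' ∈ ℝ^d. Let r_x ≥ 0, τ_x > 0, let T ≥ 1 be an integer, and set η_x = 1/(τ_x·T), β = r_x, σ = τ_x/(2τ_x + β). Fix x⁰, y ∈ (ℝ^d)^n, define x⁽⁰⁾ = x⁰ and, for t = 0,…,T−1, let x⁽ᵗ⁺¹⁾ be the unique solution of x⁽ᵗ⁺¹⁾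 = x⁽ᵗ⁾ − η_x·(g(x⁽ᵗ⁾) + β·x⁽ᵗ⁺¹⁾ − y + τ_x·(x⁽ᵗ⁺¹⁾ − x⁰)), where g(u) = (∇̂f_1(u_1),…,∇̂f_n(u_n)). Set x̃ = (1/T)∑_{t=1}^T x⁽ᵗ⁾ and x⁺ = σ·x⁽ᵀ⁾ + (1−σ)·x̃. Then for every x ∈ (ℝ^d)^n: (τ_x + r_x/2)‖x⁺ − x‖² ≤ τ_x‖x⁰ − x‖² + 2nM²/(τ_x·T) − (F(x̃) − F(x) − ⟨y, x̃ − x⟩ + (τ_x/2)‖x̃ − x⁰‖²). -/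
open scoped BigOperators RealInnerProductSpace

noncomputable section

section AuxIP
variable {E : Type*} [NormedAddCommGroup E] [InnerProductSpace ℝ E]

lemma aux_cross (u v x : E) :
    ⟪u - v, v - x⟫ = (‖u - x‖ ^ 2 - ‖v - x‖ ^ 2 - ‖u - v‖ ^ 2) / 2 := by
  have h1 : ‖(u - x) - (v - x)‖ ^ 2 = ‖u - x‖ ^ 2 - 2 * ⟪u - x, v - x⟫ + ‖v - x‖ ^ 2 :=
    norm_sub_sq_real _ _
  have h2 : (u - x) - (v - x) = u - v := by abel
  have h3 : ⟪u - v, v - x⟫ = ⟪u - x, v - x⟫ - ⟪v - x, v - x⟫ := by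
    rw [← inner_sub_left, h2]
  have h4 : ⟪v - x, v - x⟫ = ‖v - x‖ ^ 2 := real_inner_self_eq_norm_sq _
  rw [h2] at h1
  linarith

lemma aux_quad (β τ : ℝ) (y x0 w z : E) :
    (β/2) * ‖z‖ ^ 2 - ⟪y, z⟫ + (τ/2) * ‖z - x0‖ ^ 2
      - ((β/2) * ‖w‖ ^ 2 - ⟪y, w⟫ + (τ/2) * ‖w - x0‖ ^ 2)
    = ⟪β • w - y + τ • (w - x0), z - w⟫ + ((β + τ)/2) * ‖z - w‖ ^ 2 := by
  have e1 : ‖z‖ ^ 2 = ‖w‖ ^ 2 + 2 * ⟪w, z - w⟫ + ‖z - w‖ ^ 2 := by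
    have := norm_add_sq_real w (z - w)
    simpa using this
  have e2 : ‖z - x0‖ ^ 2 = ‖w - x0‖ ^ 2 + 2 * ⟪w - x0, z - w⟫ + ‖z - w‖ ^ 2 := by
    have := norm_add_sq_real (w - x0) (z - w)
    have h : (w - x0) + (z - w) = z - x0 := by abel
    rw [h] at this
    exact this
  have e3 : ⟪y, z⟫ = ⟪y, w⟫ + ⟪y, z - w⟫ := by
    rw [← inner_add_right]
    congr 1
    abel
  have e4 : ⟪β • w - y + τ • (w - x0), z - w⟫
      = β * ⟪w, z - w⟫ - ⟪y, z - w⟫ + τ * ⟪w - x0, z - w⟫ := by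
    rw [inner_add_left, inner_sub_left, real_inner_smul_left, real_inner_smul_left]
  rw [e4, e1, e2, e3]
  ring

lemma aux_expand (c w z : E) :
    ‖z - c‖ ^ 2 = ‖w - c‖ ^ 2 + 2 * ⟪w - c, z - w⟫ + ‖z - w‖ ^ 2 := by
  have := norm_add_sq_real (w - c) (z - w)
  have h : (w - c) + (z - w) = z - c := by abel
  rw [h] at this
  exact this

end AuxIP

/-- `g(u) = (∇̂f_1(u_1), …, ∇̂f_n(u_n))`. -/
def gvec {d n : ℕ}
    (gf : Fin n → EuclideanSpace ℝ (Fin d) → EuclideanSpace ℝ (Fin d))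
    (u : Vec d n) : Vec d n :=
  (WithLp.equiv 2 (∀ _ : Fin n, EuclideanSpace ℝ (Fin d))).symm fun i => gf i (u i)

set_option maxHeartbeats 2000000 in
theorem stmt15 (d n : ℕ) (hd : 1 ≤ d) (hn : 1 ≤ n) (M : ℝ) (hM : 0 ≤ M)
    (f : Fin n → EuclideanSpace ℝ (Fin d) → ℝ)
    (hconv : ∀ i, ConvexOn ℝ Set.univ (f i))
    (hlip : ∀ i x x', |f i x - f i x'| ≤ M * ‖x - x'‖)
    (gf : Fin n → EuclideanSpace ℝ (Fin d) → EuclideanSpace ℝ (Fin d))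
    (hgf : ∀ i u x', f i x' ≥ f i u + ⟪gf i u, x' - u⟫)
    (rx τx : ℝ) (hrx : 0 ≤ rx) (hτx : 0 < τx)
    (T : ℕ) (hT : 1 ≤ T)
    (ηx β σ : ℝ) (hηx : ηx = 1 / (τx * T)) (hβ : β = rx) (hσ : σ = τx / (2 * τx + β))
    (F : Vec d n → ℝ)
    (hF : ∀ x, F x = (∑ i, f i (x i)) + (rx / 2) * ‖x‖ ^ 2)
    (x0 y : Vec d n)
    (xs : ℕ → Vec d n) (hxs0 : xs 0 = x0)
    (hxs : ∀ t < T, xs (t + 1) =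
      xs t - ηx • (gvec gf (xs t) + β • xs (t + 1) - y + τx • (xs (t + 1) - x0)))
    (xtil xplus : Vec d n)
    (hxtil : xtil = (T : ℝ)⁻¹ • ∑ t ∈ Finset.Icc 1 T, xs t)
    (hxplus : xplus = σ • xs T + (1 - σ) • xtil) :
    ∀ x : Vec d n,
      (τx + rx / 2) * ‖xplus - x‖ ^ 2 ≤
        τx * ‖x0 - x‖ ^ 2 + 2 * n * M ^ 2 / (τx * T)
          - (F xtil - F x - ⟪y, xtil - x⟫ + (τx / 2) * ‖xtil - x0‖ ^ 2) := by
  simp only [hβ] at hσ hxs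
  intro x
  have hTr : (0:ℝ) < (T:ℝ) := Nat.cast_pos.mpr hT
  have hTne : (T:ℝ) ≠ 0 := ne_of_gt hTr
  have hP : (0:ℝ) < τx * T := mul_pos hτx hTr
  have hβτ : (0:ℝ) ≤ rx + τx := by linarith
  obtain ⟨L, hL0, hL2⟩ : ∃ L : ℝ, 0 ≤ L ∧ L ^ 2 = n * M ^ 2 :=
    ⟨Real.sqrt n * M, mul_nonneg (Real.sqrt_nonneg _) hM, by
      rw [mul_pow, Real.sq_sqrt (by positivity : (0:ℝ) ≤ (n:ℝ))]⟩
  -- bound on the subgradients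
  have hgB : ∀ i u, ‖gf i u‖ ≤ M := by
    intro i u
    have h1 := hgf i u (u + gf i u)
    have h2 : u + gf i u - u = gf i u := by abel
    rw [h2, real_inner_self_eq_norm_sq] at h1
    have h4 := hlip i (u + gf i u) u
    rw [h2] at h4
    have h5 : f i (u + gf i u) - f i u ≤ M * ‖gf i u‖ := (abs_le.mp h4).2
    by_contra hc
    push_neg at hc
    nlinarith [norm_nonneg (gf i u)]
  -- norm bound on gvec
  have hgnorm : ∀ u : Vec d n, ‖gvec gf u‖ ≤ L := by
    intro u
    have h1 : ‖gvec gf u‖ ^ 2 = ∑ i, ‖gf i (u i)‖ ^ 2 :=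
      PiLp.norm_sq_eq_of_L2 _ (gvec gf u)
    have h2 : ∑ i, ‖gf i (u i)‖ ^ 2 ≤ ∑ _i : Fin n, M ^ 2 :=
      Finset.sum_le_sum fun i _ =>
        pow_le_pow_left₀ (norm_nonneg _) (hgB i (u i)) 2
    have h3 : ‖gvec gf u‖ ^ 2 ≤ L ^ 2 := by
      rw [h1, hL2]
      simpa [Finset.sum_const, Finset.card_univ, nsmul_eq_mul] using h2
    have h5 := Real.sqrt_le_sqrt h3
    rwa [Real.sqrt_sq (norm_nonneg _), Real.sqrt_sq hL0] at h5
  -- subgradient inequality for the sum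
  have hsub : ∀ u w : Vec d n,
      (∑ i, f i (u i)) + ⟪gvec gf u, w - u⟫ ≤ ∑ i, f i (w i) := by
    intro u w
    have h1 : ⟪gvec gf u, w - u⟫ = ∑ i, ⟪gf i (u i), w i - u i⟫ :=
      PiLp.inner_apply _ _
    rw [h1, ← Finset.sum_add_distrib]
    exact Finset.sum_le_sum fun i _ => hgf i (u i) (w i)
  -- Cauchy–Schwarz helper
  have hCS : ∀ (u w : Vec d n), |⟪gvec gf u, w⟫| ≤ L * ‖w‖ := fun u w =>
    le_trans (abs_real_inner_le_norm _ _)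
      (mul_le_mul_of_nonneg_right (hgnorm u) (norm_nonneg _))
  obtain ⟨φ, hφ'⟩ : ∃ φ : Vec d n → ℝ, ∀ z, φ z
      = (∑ i, f i (z i)) + ((rx / 2) * ‖z‖ ^ 2 - ⟪y, z⟫ + (τx / 2) * ‖z - x0‖ ^ 2) :=
    ⟨_, fun z => rfl⟩
  -- reindexing lemma
  have reidx : ∀ (G : ℕ → ℝ),
      ∑ t ∈ Finset.Icc 1 T, G t = ∑ t ∈ Finset.range T, G (t + 1) := by
    intro G
    rw [← Finset.Ico_add_one_right_eq_Icc, Finset.sum_Ico_eq_sum_range]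
    simp [add_comm]
  -- the per-step inequality
  have key : ∀ t, t < T →
      φ (xs (t+1)) - φ x ≤ 2*L^2/(τx*T)
        + (τx*T/2) * (‖xs t - x‖^2 - ‖xs (t+1) - x‖^2)
        - ((rx+τx)/2) * ‖xs (t+1) - x‖^2 := by
    intro t ht
    have hstep := hxs t ht
    have huv : xs t - xs (t+1)
        = ηx • (gvec gf (xs t) + rx • xs (t+1) - y + τx • (xs (t+1) - x0)) :=
      sub_eq_of_eq_add' ((eq_sub_iff_add_eq.mp hstep).symm)
    have hη1 : ηx * (τx * T) = 1 := by
      rw [hηx]; field_simp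
    have hinner1 : ⟪xs t - xs (t+1), xs (t+1) - x⟫
        = ηx * ⟪gvec gf (xs t) + rx • xs (t+1) - y + τx • (xs (t+1) - x0), xs (t+1) - x⟫ := by
      rw [huv, real_inner_smul_left]
    have hinner2 : ⟪gvec gf (xs t) + rx • xs (t+1) - y + τx • (xs (t+1) - x0), xs (t+1) - x⟫
        = (τx * T) * ((‖xs t - x‖^2 - ‖xs (t+1) - x‖^2 - ‖xs t - xs (t+1)‖^2)/2) := by
      have h7 := aux_cross (xs t) (xs (t+1)) x
      have h8 : ηx * ⟪gvec gf (xs t) + rx • xs (t+1) - y + τx • (xs (t+1) - x0), xs (t+1) - x⟫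
          = (‖xs t - x‖^2 - ‖xs (t+1) - x‖^2 - ‖xs t - xs (t+1)‖^2)/2 := by
        rw [← hinner1, h7]
      calc ⟪gvec gf (xs t) + rx • xs (t+1) - y + τx • (xs (t+1) - x0), xs (t+1) - x⟫
          = (τx * T) * (ηx * ⟪gvec gf (xs t) + rx • xs (t+1) - y + τx • (xs (t+1) - x0), xs (t+1) - x⟫) := by
            rw [← mul_assoc, mul_comm (τx * (T:ℝ)) ηx, hη1, one_mul]
        _ = _ := by rw [h8]
    have e1 : (∑ i, f i (xs (t+1) i)) ≤ (∑ i, f i (xs t i)) + L * ‖xs t - xs (t+1)‖ := by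
      have h1 := hsub (xs (t+1)) (xs t)
      have h2 : -(L * ‖xs t - xs (t+1)‖) ≤ ⟪gvec gf (xs (t+1)), xs t - xs (t+1)⟫ :=
        neg_le_of_abs_le (hCS (xs (t+1)) (xs t - xs (t+1)))
      linarith
    have e2 := hsub (xs t) x
    have e3 : ⟪gvec gf (xs t), x - xs t⟫
        = ⟪gvec gf (xs t), x - xs (t+1)⟫ + ⟪gvec gf (xs t), xs (t+1) - xs t⟫ := by
      rw [← inner_add_right]; congr 1; abel
    have e4 : -(L * ‖xs t - xs (t+1)‖) ≤ ⟪gvec gf (xs t), xs (t+1) - xs t⟫ := by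
      have h := neg_le_of_abs_le (hCS (xs t) (xs (t+1) - xs t))
      rwa [norm_sub_rev (xs (t+1)) (xs t)] at h
    have e5 : ⟪gvec gf (xs t) + rx • xs (t+1) - y + τx • (xs (t+1) - x0), x - xs (t+1)⟫
        = ⟪gvec gf (xs t), x - xs (t+1)⟫
          + ⟪rx • xs (t+1) - y + τx • (xs (t+1) - x0), x - xs (t+1)⟫ := by
      rw [← inner_add_left]; congr 1; abel
    have e6 : ⟪gvec gf (xs t) + rx • xs (t+1) - y + τx • (xs (t+1) - x0), x - xs (t+1)⟫
        = -⟪gvec gf (xs t) + rx • xs (t+1) - y + τx • (xs (t+1) - x0), xs (t+1) - x⟫ := by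
      rw [← inner_neg_right]; congr 1; abel
    have e7 := aux_quad rx τx y x0 (xs (t+1)) x
    rw [show ‖x - xs (t+1)‖ = ‖xs (t+1) - x‖ from norm_sub_rev _ _] at e7
    have hc : (2*L^2/(τx*T)) * (τx*T) = 2*L^2 := by field_simp
    have e9 : 2*L*‖xs t - xs (t+1)‖
        ≤ (τx*T/2)*‖xs t - xs (t+1)‖^2 + 2*L^2/(τx*T) := by
      have h0 : (0:ℝ) ≤ (τx*T*‖xs t - xs (t+1)‖ - 2*L)^2 := sq_nonneg _
      have h1 : (0:ℝ) ≤ ((τx*T*‖xs t - xs (t+1)‖ - 2*L)^2) / (2*(τx*T)) :=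
        div_nonneg h0 (by linarith)
      have h2 : ((τx*T*‖xs t - xs (t+1)‖ - 2*L)^2) / (2*(τx*T))
          = (τx*T/2)*‖xs t - xs (t+1)‖^2 - 2*L*‖xs t - xs (t+1)‖ + 2*L^2/(τx*T) := by
        field_simp
        ring
      linarith
    linarith [hφ' (xs (t+1)), hφ' x, e1, e2, e3, e4, e5, e6, e7, e9, hinner2]
  -- summation
  have sum1 : ∑ t ∈ Finset.range T, (φ (xs (t+1)) - φ x)
      ≤ ∑ t ∈ Finset.range T, (2*L^2/(τx*T)
          + (τx*T/2) * (‖xs t - x‖^2 - ‖xs (t+1) - x‖^2)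
          - ((rx+τx)/2) * ‖xs (t+1) - x‖^2) :=
    Finset.sum_le_sum fun t ht => key t (Finset.mem_range.mp ht)
  have lhs1 : ∑ t ∈ Finset.range T, (φ (xs (t+1)) - φ x)
      = (∑ t ∈ Finset.Icc 1 T, φ (xs t)) - T * φ x := by
    rw [Finset.sum_sub_distrib, Finset.sum_const, Finset.card_range, nsmul_eq_mul,
      reidx (fun t => φ (xs t))]
  have tele : ∑ t ∈ Finset.range T, (‖xs t - x‖^2 - ‖xs (t+1) - x‖^2)
      = ‖x0 - x‖^2 - ‖xs T - x‖^2 := by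
    rw [Finset.sum_range_sub' (fun t => ‖xs t - x‖^2) T, hxs0]
  have rhs1 : ∑ t ∈ Finset.range T, (2*L^2/(τx*T)
          + (τx*T/2) * (‖xs t - x‖^2 - ‖xs (t+1) - x‖^2)
          - ((rx+τx)/2) * ‖xs (t+1) - x‖^2)
      = T * (2*L^2/(τx*T)) + (τx*T/2) * (‖x0 - x‖^2 - ‖xs T - x‖^2)
          - ((rx+τx)/2) * ∑ t ∈ Finset.Icc 1 T, ‖xs t - x‖^2 := by
    rw [Finset.sum_sub_distrib, Finset.sum_add_distrib, Finset.sum_const,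
      Finset.card_range, nsmul_eq_mul, ← Finset.mul_sum, tele, ← Finset.mul_sum,
      reidx (fun t => ‖xs t - x‖^2)]
  -- Jensen-type inequalities
  have hA : ∑ t ∈ Finset.Icc 1 T, xs t = (T:ℝ) • xtil := by
    rw [hxtil, smul_smul, mul_inv_cancel₀ hTne, one_smul]
  have hzero : ∑ t ∈ Finset.Icc 1 T, (xs t - xtil) = 0 := by
    rw [Finset.sum_sub_distrib, hA, Finset.sum_const, Nat.card_Icc]
    have h : T + 1 - 1 = T := by omega
    rw [h, ← Nat.cast_smul_eq_nsmul ℝ T xtil, sub_self]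
  have hzcross : ∀ w : Vec d n, ∑ t ∈ Finset.Icc 1 T, ⟪w, xs t - xtil⟫ = 0 := by
    intro w
    rw [← inner_sum, hzero, inner_zero_right]
  have cardIcc : (Finset.Icc 1 T).card = T := by rw [Nat.card_Icc]; omega
  have jensen1 : (T:ℝ) * φ xtil ≤ ∑ t ∈ Finset.Icc 1 T, φ (xs t) := by
    have hlow : ∀ z : Vec d n,
        φ xtil + ⟪gvec gf xtil, z - xtil⟫
          + ⟪rx • xtil - y + τx • (xtil - x0), z - xtil⟫ ≤ φ z := by
      intro z
      have h1 := hsub xtil z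
      have h2 := aux_quad rx τx y x0 xtil z
      have h3 : 0 ≤ ((rx+τx)/2) * ‖z - xtil‖^2 :=
        mul_nonneg (by linarith) (sq_nonneg _)
      linarith [hφ' z, hφ' xtil]
    have hconst : ∑ t ∈ Finset.Icc 1 T, (φ xtil + ⟪gvec gf xtil, xs t - xtil⟫
          + ⟪rx • xtil - y + τx • (xtil - x0), xs t - xtil⟫) = (T:ℝ) * φ xtil := by
      rw [Finset.sum_add_distrib, Finset.sum_add_distrib, hzcross, hzcross,
        add_zero, add_zero, Finset.sum_const, cardIcc, nsmul_eq_mul]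
    calc (T:ℝ) * φ xtil = _ := hconst.symm
      _ ≤ ∑ t ∈ Finset.Icc 1 T, φ (xs t) :=
        Finset.sum_le_sum fun t _ => hlow (xs t)
  have jensen2 : (T:ℝ) * ‖xtil - x‖^2 ≤ ∑ t ∈ Finset.Icc 1 T, ‖xs t - x‖^2 := by
    have hlow : ∀ z : Vec d n,
        ‖xtil - x‖^2 + 2*⟪xtil - x, z - xtil⟫ ≤ ‖z - x‖^2 := by
      intro z
      have h1 := aux_expand x xtil z
      nlinarith [sq_nonneg ‖z - xtil‖]
    have hconst : ∑ t ∈ Finset.Icc 1 T, (‖xtil - x‖^2 + 2*⟪xtil - x, xs t - xtil⟫)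
        = (T:ℝ) * ‖xtil - x‖^2 := by
      rw [Finset.sum_add_distrib, ← Finset.mul_sum, hzcross, mul_zero, add_zero,
        Finset.sum_const, cardIcc, nsmul_eq_mul]
    calc (T:ℝ) * ‖xtil - x‖^2 = _ := hconst.symm
      _ ≤ _ := Finset.sum_le_sum fun t _ => hlow (xs t)
  -- combine and divide by T
  have cum : (∑ t ∈ Finset.Icc 1 T, φ (xs t)) - T * φ x
      ≤ T * (2*L^2/(τx*T)) + (τx*T/2) * (‖x0 - x‖^2 - ‖xs T - x‖^2)
        - ((rx+τx)/2) * ∑ t ∈ Finset.Icc 1 T, ‖xs t - x‖^2 := by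
    rw [← rhs1, ← lhs1]; exact sum1
  have hmulJ : ((rx+τx)/2) * ((T:ℝ) * ‖xtil - x‖^2)
      ≤ ((rx+τx)/2) * ∑ t ∈ Finset.Icc 1 T, ‖xs t - x‖^2 :=
    mul_le_mul_of_nonneg_left jensen2 (by linarith)
  have main : (T:ℝ) * (φ xtil - φ x)
      ≤ (T:ℝ) * (2*L^2/(τx*T) + (τx/2) * (‖x0 - x‖^2 - ‖xs T - x‖^2)
          - ((rx+τx)/2) * ‖xtil - x‖^2) := by
    nlinarith [cum, jensen1, hmulJ]
  have avg : φ xtil - φ x ≤ 2*L^2/(τx*T) + (τx/2) * (‖x0 - x‖^2 - ‖xs T - x‖^2)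
      - ((rx+τx)/2) * ‖xtil - x‖^2 :=
    le_of_mul_le_mul_left main hTr
  -- convex-combination step
  have hden : (0:ℝ) < 2*τx + rx := by linarith
  have hden' : (2*τx + rx) ≠ 0 := ne_of_gt hden
  have hσ0 : 0 ≤ σ := by rw [hσ]; positivity
  have hσ1 : σ ≤ 1 := by rw [hσ, div_le_one hden]; linarith
  have hxplus' : xplus - x = σ • (xs T - x) + (1 - σ) • (xtil - x) := by
    rw [hxplus]; module
  have conv : ‖xplus - x‖^2 ≤ σ * ‖xs T - x‖^2 + (1-σ) * ‖xtil - x‖^2 := by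
    rw [hxplus']
    have h1 := norm_add_sq_real (σ • (xs T - x)) ((1-σ) • (xtil - x))
    rw [norm_smul, norm_smul, Real.norm_eq_abs, Real.norm_eq_abs,
      abs_of_nonneg hσ0, abs_of_nonneg (by linarith : (0:ℝ) ≤ 1 - σ),
      real_inner_smul_left, real_inner_smul_right] at h1
    have h4 : 2*⟪xs T - x, xtil - x⟫ ≤ ‖xs T - x‖^2 + ‖xtil - x‖^2 := by
      have h := norm_sub_sq_real (xs T - x) (xtil - x)
      nlinarith [sq_nonneg ‖xs T - x - (xtil - x)‖]
    have h5 : 0 ≤ σ * (1-σ) * (‖xs T - x‖^2 + ‖xtil - x‖^2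
        - 2*⟪xs T - x, xtil - x⟫) :=
      mul_nonneg (mul_nonneg hσ0 (by linarith)) (by linarith)
    nlinarith [h1, h5]
  have hc1 : (τx + rx/2) * σ = τx/2 := by
    rw [hσ]; field_simp
  have hc2 : (τx + rx/2) * (1-σ) = (rx+τx)/2 := by
    rw [hσ]; field_simp; ring
  have hconvmul : (τx + rx/2) * ‖xplus - x‖^2
      ≤ (τx/2) * ‖xs T - x‖^2 + ((rx+τx)/2) * ‖xtil - x‖^2 := by
    have h6 : (τx + rx/2) * ‖xplus - x‖^2
        ≤ (τx + rx/2) * (σ * ‖xs T - x‖^2 + (1-σ) * ‖xtil - x‖^2) :=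
      mul_le_mul_of_nonneg_left conv (by linarith)
    have h7 : (τx + rx/2) * (σ * ‖xs T - x‖^2 + (1-σ) * ‖xtil - x‖^2)
        = (τx/2) * ‖xs T - x‖^2 + ((rx+τx)/2) * ‖xtil - x‖^2 := by
      linear_combination ‖xs T - x‖^2 * hc1 + ‖xtil - x‖^2 * hc2
    linarith
  -- final assembly
  rw [hF xtil, hF x]
  have hFy : ⟪y, xtil - x⟫ = ⟪y, xtil⟫ - ⟪y, x⟫ := inner_sub_right _ _ _
  have hφx := hφ' x
  rw [show ‖x - x0‖ = ‖x0 - x‖ from norm_sub_rev _ _] at hφx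
  have hLL : 2*L^2/(τx*T) = 2*n*M^2/(τx*T) := by rw [hL2]; ring
  linarith [avg, hconvmul, hφ' xtil, hφx, hFy, hLL]

end
end
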